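/- For every s ∈ ℝ (including points where the line crosses the x₃-axis, i.e. u(s) = 0), the function s ↦ ∫₀^{φ(s)} a(t) dt is differentiable at s with derivative equal to ⟨A(x(s)), ω⟩. -/

import Mathlib

open Real MeasureTheory Filter
open scoped RealInnerProductSpace Topology

noncomputable section

/-- `ℝ³` as a Euclidean space. -/
abbrev E3 := EuclideanSpace ℝ (Fin 3)

/-- The colatitude `φ_x = arccos(x₃/|x|)` of a point of `ℝ³`. -/
def colat (x : E3) : ℝ := Real.arccos (x 2 / ‖x‖)

/-- The unit vector `e_{φ_x}` of spherical coordinates. -/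
def ephi (x : E3) : E3 :=
  (1 / ‖x‖) • (WithLp.equiv 2 (Fin 3 → ℝ)).symm
    ![x 0 * x 2 / Real.sqrt ((x 0)^2 + (x 1)^2),
      x 1 * x 2 / Real.sqrt ((x 0)^2 + (x 1)^2),
      - Real.sqrt ((x 0)^2 + (x 1)^2)]

/-- The magnetic potential `A(x) = (a(φ_x)/|x|) e_{φ_x}` (set to `0` on the `x₃`-axis). -/
def magA (a : ℝ → ℝ) (x : E3) : E3 :=
  if 0 < (x 0)^2 + (x 1)^2 then (a (colat x) / ‖x‖) • ephi x else 0

set_option maxHeartbeats 1000000 in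
/-- Along the line `x(s) = b + sω` (with `|ω| = 1`, `⟨b,ω⟩ = 0`, `b ≠ 0`),
for every `s ∈ ℝ` (including the points where the line crosses the `x₃`-axis, i.e. where
`u(s) = 0`), the function `s ↦ ∫₀^{φ(s)} a(t) dt` is differentiable at `s` with derivative
`⟨A(x(s)), ω⟩`. -/
theorem primitive_a_of_colat_hasDerivAt (a : ℝ → ℝ) (ha : ContDiff ℝ (⊤ : ℕ∞) a)
    (hpos : ∀ t, 0 ≤ a t) (hcs : HasCompactSupport a)
    (hsupp : tsupport a ⊆ Set.Ioo 0 Real.pi)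
    (ω b : E3) (hω : ‖ω‖ = 1) (hbω : ⟪b, ω⟫ = 0) (hb : b ≠ 0) (s : ℝ) :
    HasDerivAt
      (fun s : ℝ => ∫ t in (0:ℝ)..(Real.arccos ((b 2 + s * ω 2) / ‖b + s • ω‖)), a t)
      ⟪magA a (b + s • ω), ω⟫ s := by
  have haC : Continuous a := ha.continuous
  have hB : 0 < ‖b‖ := norm_pos_iff.mpr hb
  have hn : ∀ t : ℝ, ‖b + t • ω‖ = Real.sqrt (‖b‖^2 + t^2) := by
    intro t
    have h2 : ‖b + t • ω‖^2 = ‖b‖^2 + t^2 := by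
      rw [norm_add_sq_real, real_inner_smul_right, hbω, norm_smul, hω]
      simp [mul_pow, sq_abs]
    rw [← h2, Real.sqrt_sq (norm_nonneg _)]
  have hnpos : ∀ t : ℝ, 0 < ‖b + t • ω‖ := by
    intro t; rw [hn]; exact Real.sqrt_pos.mpr (by positivity)
  set g : ℝ → ℝ := fun t => (b 2 + t * ω 2) / ‖b + t • ω‖ with hg
  set φ : ℝ → ℝ := fun t => Real.arccos (g t) with hφ
  set F : ℝ → ℝ := fun y => ∫ t in (0:ℝ)..y, a t with hF
  have hFg : (fun s : ℝ => ∫ t in (0:ℝ)..(Real.arccos ((b 2 + s * ω 2) / ‖b + s • ω‖)), a t)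
      = fun t => F (φ t) := rfl
  rw [hFg]
  set x : E3 := b + s • ω with hxdef
  have hxi : ∀ i, x i = b i + s * ω i := by intro i; simp [hxdef]
  set r : ℝ := ‖x‖ with hr
  have hrpos : 0 < r := hnpos s
  have hr2 : (x 0)^2 + (x 1)^2 + (x 2)^2 = r^2 := by
    rw [hr, EuclideanSpace.norm_eq, Real.sq_sqrt (by positivity)]
    simp [Fin.sum_univ_three, sq_abs]
  have hxω : x 0 * ω 0 + x 1 * ω 1 + x 2 * ω 2 = s := by
    have h : ⟪x, ω⟫ = s := by
      rw [hxdef, inner_add_left, hbω, real_inner_smul_left, real_inner_self_eq_norm_sq, hω]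
      ring
    rw [← h]; simp [PiLp.inner_apply, Fin.sum_univ_three]; ring
  have hb2 : b 2 + s * ω 2 = x 2 := (hxi 2).symm
  have hgx : g s = x 2 / r := by rw [hg]; simp only; rw [hb2, ← hxdef, ← hr]
  have hrs : r = Real.sqrt (‖b‖^2 + s^2) := by rw [hr, hxdef, hn]
  set X0 : ℝ := x 0 with hX0
  set X1 : ℝ := x 1 with hX1
  set X2 : ℝ := x 2 with hX2
  set W0 : ℝ := ω 0 with hW0
  set W1 : ℝ := ω 1 with hW1
  set W2 : ℝ := ω 2 with hW2
  clear_value x r X0 X1 X2 W0 W1 W2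
  by_cases hu : 0 < X0^2 + X1^2
  · -- regular case
    set u : ℝ := Real.sqrt (X0^2 + X1^2) with hudef
    have hupos : 0 < u := Real.sqrt_pos.mpr hu
    have hu2 : u^2 = X0^2 + X1^2 := Real.sq_sqrt (le_of_lt hu)
    have hg2 : (g s)^2 < 1 := by
      rw [hgx, div_pow, div_lt_one (by positivity)]; nlinarith
    have hg1 : g s ≠ 1 := by nlinarith
    have hg1' : g s ≠ -1 := by nlinarith
    have hnum : HasDerivAt (fun t : ℝ => b 2 + t * ω 2) (W2) s := by
      rw [hW2]
      simpa [mul_comm] using ((hasDerivAt_id s).const_mul (ω 2)).const_add (b 2)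
    have hsqne : Real.sqrt (‖b‖^2 + s^2) ≠ 0 := by positivity
    have hden : HasDerivAt (fun t : ℝ => ‖b + t • ω‖) (s / r) s := by
      have h1 : HasDerivAt (fun t : ℝ => ‖b‖^2 + t^2) (2 * s) s := by
        simpa using (hasDerivAt_pow 2 s).const_add (‖b‖^2)
      have h2 : HasDerivAt Real.sqrt (1 / (2 * Real.sqrt (‖b‖^2 + s^2))) (‖b‖^2 + s^2) :=
        Real.hasDerivAt_sqrt (by positivity)
      have h3 : HasDerivAt (fun t : ℝ => ‖b + t • ω‖)
          (1 / (2 * Real.sqrt (‖b‖^2 + s^2)) * (2 * s)) s :=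
        (h2.comp s h1).congr_of_eventuallyEq (by filter_upwards with t; rw [hn]; rfl)
      convert h3 using 1
      rw [hrs]; field_simp
    have hr' : ‖b + s • ω‖ = r := by rw [hr, hxdef]
    have hgd : HasDerivAt g ((W2 * r - (b 2 + s * ω 2) * (s / r)) / r^2) s := by
      have h := hnum.div hden (by rw [hr']; exact ne_of_gt hrpos)
      rw [hr'] at h
      exact h
    have harc : HasDerivAt Real.arccos (-(1 / Real.sqrt (1 - (g s)^2))) (g s) :=
      Real.hasDerivAt_arccos hg1' hg1
    have hφd : HasDerivAt φ (-(1 / Real.sqrt (1 - (g s)^2)) *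
        ((W2 * r - (b 2 + s * ω 2) * (s / r)) / r^2)) s := harc.comp s hgd
    have hFd : HasDerivAt F (a (φ s)) (φ s) :=
      intervalIntegral.integral_hasDerivAt_right (haC.intervalIntegrable _ _)
        (haC.stronglyMeasurableAtFilter _ _) haC.continuousAt
    have hcomp := hFd.comp s hφd
    refine HasDerivAt.congr_deriv (hcomp.congr_of_eventuallyEq (by rfl)) ?_
    -- value computation
    have hsq : Real.sqrt (1 - (g s)^2) = u / r := by
      have h1 : 1 - (g s)^2 = (u / r)^2 := by
        rw [hgx, div_pow, div_pow]
        rw [hu2]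
        field_simp
        linarith
      rw [h1, Real.sqrt_sq (by positivity)]
    have hcolat : colat x = φ s := by rw [colat, ← hr, ← hX2, ← hgx]
    have hInner : ⟪magA a x, ω⟫ = (a (φ s) / r) * ((1/r) *
        ((X0 * X2 / u) * W0 + (X1 * X2 / u) * W1 + (-u) * W2)) := by
      rw [magA, if_pos (by rw [← hX0, ← hX1]; exact hu), ephi, hcolat, ← hr,
        ← hX0, ← hX1, ← hX2, ← hudef]
      rw [inner_smul_left, inner_smul_left]
      rw [show ⟪(WithLp.equiv 2 (Fin 3 → ℝ)).symm ![X0 * X2 / u, X1 * X2 / u, -u], ω⟫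
          = (X0 * X2 / u) * W0 + (X1 * X2 / u) * W1 + (-u) * W2 by
        simp [PiLp.inner_apply, Fin.sum_univ_three, hW0, hW1, hW2]; ring]
      simp [starRingEnd_apply]
    rw [hsq, hInner, ← hW2, hb2]
    field_simp
    ring_nf
    linear_combination (-(a (φ s)) * X2) * hxω + (a (φ s) * W2) * hr2 +
      (a (φ s) * W2) * hu2
  · -- axis case
    have hu0 : X0^2 + X1^2 = 0 := le_antisymm (not_lt.mp hu) (by positivity)
    have hmag : ⟪magA a x, ω⟫ = (0:ℝ) := by
      rw [magA, if_neg (by rw [← hX0, ← hX1]; exact hu), inner_zero_left]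
    rw [hmag]
    have hx2 : X2^2 = r^2 := by nlinarith
    have hφs : φ s = 0 ∨ φ s = Real.pi := by
      have h0 : (X2 - r) * (X2 + r) = 0 := by nlinarith
      rcases mul_eq_zero.mp h0 with h | h
      · left
        rw [hφ]; simp only; rw [hgx, show X2 = r by linarith, div_self (ne_of_gt hrpos),
          Real.arccos_one]
      · right
        rw [hφ]; simp only; rw [hgx, show X2 = -r by linarith]
        rw [show -r / r = (-1 : ℝ) by field_simp]
        exact Real.arccos_neg_one
    have hnotin : φ s ∉ tsupport a := by
      intro hmem
      have h2 := hsupp hmem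
      rcases hφs with h | h <;> rw [h] at h2 <;> simp [Set.mem_Ioo] at h2
    have hev : a =ᶠ[𝓝 (φ s)] 0 := notMem_tsupport_iff_eventuallyEq.mp hnotin
    obtain ⟨ε, hε, hball⟩ := Metric.eventually_nhds_iff.mp hev
    have hcont : ContinuousAt φ s := by
      apply Real.continuous_arccos.continuousAt.comp
      exact ContinuousAt.div (by fun_prop) (by fun_prop) (ne_of_gt (hnpos s))
    have hev2 : ∀ᶠ t in 𝓝 s, φ t ∈ Metric.ball (φ s) ε :=
      hcont (Metric.ball_mem_nhds (φ s) hε)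
    have heq : (fun t => F (φ t)) =ᶠ[𝓝 s] fun _ => F (φ s) := by
      filter_upwards [hev2] with t ht
      have hsplit : F (φ s) + ∫ y in (φ s)..(φ t), a y = F (φ t) :=
        intervalIntegral.integral_add_adjacent_intervals
          (haC.intervalIntegrable _ _) (haC.intervalIntegrable _ _)
      have hz : (∫ y in (φ s)..(φ t), a y) = 0 := by
        rw [intervalIntegral.integral_congr (g := fun _ => (0:ℝ)) ?_,
          intervalIntegral.integral_zero]
        intro y hy
        exact hball (lt_of_le_of_lt
          (Real.dist_le_of_mem_uIcc hy Set.left_mem_uIcc)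
          (by rwa [Metric.mem_ball, dist_comm] at ht))
      show F (φ t) = F (φ s)
      rw [← hsplit, hz, add_zero]
    exact (hasDerivAt_const s (F (φ s))).congr_of_eventuallyEq heq
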